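/- Let S = C̄_φ be as in the classification of symmetric composition superalgebras in characteristic 2, with product x*y = φ(x̄)·φ²(ȳ), where φ ≠ 1 is an order-3 automorphism of the Cayley superalgebra (C,·) fixing the even part pointwise and with no nonzero fixed odd vectors. Then a decomposition S = ⊕_{g∈G} Sᵍ compatible with the main ℤ₂-grading is a group grading of (S,*) if and only if it is a group grading of (S,·) all of whose homogeneous components Sᵍ are φ-invariant. -/

import Mathlib

set_option linter.unusedSectionVars false
set_option linter.unusedVariables false


open QuadraticMap

/-- The sign `(−1)^i` for a parity `i ∈ ℤ₂`, as an element of `F`. -/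
def sgn2 (F : Type*) [Field F] : ZMod 2 → F := fun i => if i = 0 then 1 else -1

/-- `x` is homogeneous of parity `i` with respect to the decomposition `even ⊕ odd`. -/
def IsPar {F S : Type*} [Field F] [AddCommGroup S] [Module F S]
    (even odd : Submodule F S) (x : S) (i : ZMod 2) : Prop :=
  (i = 0 ∧ x ∈ even) ∨ (i = 1 ∧ x ∈ odd)

/-- A composition superalgebra structure on the vector space `S` with (not necessarily
associative, not necessarily unital) bilinear multiplication `mul`: a `ℤ₂`-graded algebra
`S = even ⊕ odd` with a regular quadratic superform `q = (q0, b)` satisfying the composition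
superalgebra axioms. -/
structure SuperComp (F S : Type*) [Field F] [AddCommGroup S] [Module F S]
    (mul : S →ₗ[F] S →ₗ[F] S) where
  even : Submodule F S
  odd : Submodule F S
  compl : IsCompl even odd
  mul_ee : ∀ x ∈ even, ∀ y ∈ even, mul x y ∈ even
  mul_eo : ∀ x ∈ even, ∀ y ∈ odd, mul x y ∈ odd
  mul_oe : ∀ x ∈ odd, ∀ y ∈ even, mul x y ∈ odd
  mul_oo : ∀ x ∈ odd, ∀ y ∈ odd, mul x y ∈ even
  /-- the quadratic form `q0` on the even part -/
  q0 : QuadraticForm F even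
  /-- the even supersymmetric bilinear form `b` -/
  b : S →ₗ[F] S →ₗ[F] F
  /-- on the even part, `b` is the polar form of `q0` -/
  b_polar : ∀ x y : even, b x y = polar q0 x y
  /-- `b` is alternating on the odd part -/
  b_alt_odd : ∀ x ∈ odd, b x x = 0
  b_alt_skew : ∀ x ∈ odd, ∀ y ∈ odd, b x y = - b y x
  /-- `b` is even: even and odd parts are orthogonal -/
  b_eo : ∀ x ∈ even, ∀ y ∈ odd, b x y = 0 ∧ b y x = 0
  /-- regularity of `q0` (KMRT-style) -/
  q0_reg : ∀ x : even, (∀ y : even, polar q0 x y = 0) → q0 x = 0 → (x : S) = 0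
  /-- nondegeneracy of `b` on the odd part -/
  b_odd_nondeg : ∀ x ∈ odd, (∀ y ∈ odd, b x y = 0) → x = 0
  /-- composition axiom i): `q0` is multiplicative on the even part -/
  comp_i : ∀ x y : even, q0 ⟨mul x y, mul_ee x x.2 y y.2⟩ = q0 x * q0 y
  /-- composition axiom ii) -/
  comp_ii₁ : ∀ (x : even) (y z : S), b (mul x y) (mul x z) = q0 x * b y z
  comp_ii₂ : ∀ (x : even) (y z : S), b (mul y x) (mul z x) = q0 x * b y z
  /-- composition axiom iii), for homogeneous elements -/
  comp_iii : ∀ (px py pz pt : ZMod 2) (x y z t : S),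
    IsPar even odd x px → IsPar even odd y py → IsPar even odd z pz → IsPar even odd t pt →
    b (mul x y) (mul z t) + sgn2 F (px * py + px * pz + py * pz) * b (mul z y) (mul x t)
      = sgn2 F (py * pz) * (b x z * b y t)

/-- A Hurwitz superalgebra structure: a unital composition superalgebra. -/
structure HurwitzSuperOn (F S : Type*) [Field F] [AddCommGroup S] [Module F S]
    (mul : S →ₗ[F] S →ₗ[F] S) extends SuperComp F S mul where
  one : S
  one_even : one ∈ even
  one_mul : ∀ x : S, mul one x = x
  mul_one : ∀ x : S, mul x one = x

namespace OkuboAux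

variable {F S G : Type*} [Field F] [AddCommGroup S] [Module F S]
variable {mul : S →ₗ[F] S →ₗ[F] S}

theorem two0 (hchar : ringChar F = 2) : (2 : F) = 0 := by
  have : ((2:ℕ) : F) = 0 := (ringChar.spec F 2).mpr (by rw [hchar])
  exact_mod_cast this

theorem negF (hchar : ringChar F = 2) (a : F) : -a = a := by
  have : a + a = 0 := by rw [← two_mul, two0 hchar, zero_mul]
  exact neg_eq_of_add_eq_zero_left this

theorem addFself (hchar : ringChar F = 2) (a : F) : a + a = 0 := by
  rw [← two_mul, two0 hchar, zero_mul]

theorem negS (hchar : ringChar F = 2) (w : S) : -w = w := by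
  have : w + w = 0 := by
    rw [← two_smul F w, two0 hchar, zero_smul]
  exact neg_eq_of_add_eq_zero_left this

theorem addSself (hchar : ringChar F = 2) (w : S) : w + w = 0 := by
  rw [← two_smul F w, two0 hchar, zero_smul]

theorem subS (hchar : ringChar F = 2) (v w : S) : v - w = v + w := by
  rw [sub_eq_add_neg, negS hchar]

theorem sgn_one (hchar : ringChar F = 2) (i : ZMod 2) : sgn2 F i = 1 := by
  unfold sgn2
  split
  · rfl
  · exact negF hchar 1

section Base

variable (H : HurwitzSuperOn F S mul)

theorem decEO (x : S) : ∃ a ∈ H.even, ∃ c ∈ H.odd, x = a + c := by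
  have : x ∈ H.even ⊔ H.odd := by
    rw [H.compl.sup_eq_top]; trivial
  rcases Submodule.mem_sup.mp this with ⟨a, ha, c, hc, h⟩
  exact ⟨a, ha, c, hc, h.symm⟩

theorem eo_disj {x : S} (he : x ∈ H.even) (ho : x ∈ H.odd) : x = 0 := by
  have := H.compl.disjoint
  exact (Submodule.disjoint_def.mp this) x he ho

theorem bsymm (hchar : ringChar F = 2) (x y : S) : H.b x y = H.b y x := by
  obtain ⟨a, ha, c, hc, rfl⟩ := decEO H x
  obtain ⟨a', ha', c', hc', rfl⟩ := decEO H y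
  have h1 : H.b a a' = H.b a' a := by
    have := H.b_polar ⟨a, ha⟩ ⟨a', ha'⟩
    have h2 := H.b_polar ⟨a', ha'⟩ ⟨a, ha⟩
    rw [this, h2, polar_comm]
  have h2 : H.b a c' = 0 := (H.b_eo a ha c' hc').1
  have h3 : H.b c' a = 0 := (H.b_eo a ha c' hc').2
  have h4 : H.b a' c = 0 := (H.b_eo a' ha' c hc).1
  have h5 : H.b c a' = 0 := (H.b_eo a' ha' c hc).2
  have h6 : H.b c c' = H.b c' c := by
    rw [H.b_alt_skew c hc c' hc']; exact negF hchar _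
  simp only [map_add, LinearMap.add_apply]
  linear_combination h1 + h2 - h3 - h4 + h5 + h6

theorem b11 (hchar : ringChar F = 2) : H.b H.one H.one = 0 := by
  have := H.b_polar ⟨H.one, H.one_even⟩ ⟨H.one, H.one_even⟩
  rw [this, polar_self, two_nsmul]
  exact addFself hchar _

theorem isParE {x : S} (hx : x ∈ H.even) : IsPar H.even H.odd x 0 := Or.inl ⟨rfl, hx⟩
theorem isParO {x : S} (hx : x ∈ H.odd) : IsPar H.even H.odd x 1 := Or.inr ⟨rfl, hx⟩

/-- the fundamental identity, for parity-homogeneous entries -/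
theorem f4h (hchar : ringChar F = 2) {px py pz pt : ZMod 2} {x y z t : S}
    (hx : IsPar H.even H.odd x px) (hy : IsPar H.even H.odd y py)
    (hz : IsPar H.even H.odd z pz) (ht : IsPar H.even H.odd t pt) :
    H.b (mul x y) (mul z t) + H.b (mul z y) (mul x t) = H.b x z * H.b y t := by
  have := H.comp_iii px py pz pt x y z t hx hy hz ht
  rwa [sgn_one hchar, sgn_one hchar, one_mul, one_mul] at this

/-- the fundamental identity (characteristic 2 version) -/
theorem f4 (hchar : ringChar F = 2) (x y z t : S) :
    H.b (mul x y) (mul z t) + H.b (mul z y) (mul x t) = H.b x z * H.b y t := by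
  obtain ⟨a1, h1, c1, k1, rfl⟩ := decEO H x
  obtain ⟨a2, h2, c2, k2, rfl⟩ := decEO H y
  obtain ⟨a3, h3, c3, k3, rfl⟩ := decEO H z
  obtain ⟨a4, h4, c4, k4, rfl⟩ := decEO H t
  have E := fun {w} (hw : w ∈ H.even) => isParE H hw
  have O := fun {w} (hw : w ∈ H.odd) => isParO H hw
  have i1 := f4h H hchar (E h1) (E h2) (E h3) (E h4)
  have i2 := f4h H hchar (E h1) (E h2) (E h3) (O k4)
  have i3 := f4h H hchar (E h1) (E h2) (O k3) (E h4)
  have i4 := f4h H hchar (E h1) (E h2) (O k3) (O k4)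
  have i5 := f4h H hchar (E h1) (O k2) (E h3) (E h4)
  have i6 := f4h H hchar (E h1) (O k2) (E h3) (O k4)
  have i7 := f4h H hchar (E h1) (O k2) (O k3) (E h4)
  have i8 := f4h H hchar (E h1) (O k2) (O k3) (O k4)
  have i9 := f4h H hchar (O k1) (E h2) (E h3) (E h4)
  have i10 := f4h H hchar (O k1) (E h2) (E h3) (O k4)
  have i11 := f4h H hchar (O k1) (E h2) (O k3) (E h4)
  have i12 := f4h H hchar (O k1) (E h2) (O k3) (O k4)
  have i13 := f4h H hchar (O k1) (O k2) (E h3) (E h4)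
  have i14 := f4h H hchar (O k1) (O k2) (E h3) (O k4)
  have i15 := f4h H hchar (O k1) (O k2) (O k3) (E h4)
  have i16 := f4h H hchar (O k1) (O k2) (O k3) (O k4)
  simp only [map_add, LinearMap.add_apply] at *
  linear_combination i1 + i2 + i3 + i4 + i5 + i6 + i7 + i8 + i9 + i10 + i11 + i12 + i13 +
    i14 + i15 + i16

end Base

section Derived

variable (H : HurwitzSuperOn F S mul)

theorem f5 (hchar : ringChar F = 2) (x y t : S) :
    H.b (mul x y) t + H.b y (mul x t) = H.b x H.one * H.b y t := by
  have := f4 H hchar x y H.one t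
  rwa [H.one_mul, H.one_mul] at this

theorem f6 (hchar : ringChar F = 2) (x y z : S) :
    H.b (mul x y) z + H.b (mul z y) x = H.b x z * H.b y H.one := by
  have := f4 H hchar x y z H.one
  rwa [H.mul_one, H.mul_one] at this

theorem f9 (hchar : ringChar F = 2) (x y : S) :
    H.b (mul x y) H.one = H.b x y + H.b x H.one * H.b y H.one := by
  have h := f5 H hchar x y H.one
  rw [H.mul_one] at h
  have hs := bsymm H hchar x y
  linear_combination h - hs - H.b y x * two0 hchar

theorem ellodd {x : S} (hx : x ∈ H.odd) : H.b x H.one = 0 :=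
  (H.b_eo H.one H.one_even x hx).2

theorem oddNe (h8 : Module.finrank F S = 8) (h4 : Module.finrank F H.even = 4) :
    ∃ w ∈ H.odd, w ≠ 0 := by
  by_contra hc
  push_neg at hc
  have hbot : H.odd = ⊥ := by
    rw [eq_bot_iff]; intro w hw
    exact (Submodule.mem_bot F).mpr (hc w hw)
  have htop : H.even = ⊤ := by
    have := H.compl.sup_eq_top
    rwa [hbot, sup_bot_eq] at this
  have : Module.finrank F H.even = 8 := by
    rw [htop, finrank_top, h8]
  omega

theorem oddPair (h8 : Module.finrank F S = 8) (h4 : Module.finrank F H.even = 4) :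
    ∃ w ∈ H.odd, ∃ z ∈ H.odd, H.b w z ≠ 0 := by
  obtain ⟨w, hw, hw0⟩ := oddNe H h8 h4
  by_contra hc
  push_neg at hc
  exact hw0 (H.b_odd_nondeg w hw (fun z hz => hc w hw z hz))

theorem q01 (h8 : Module.finrank F S = 8) (h4 : Module.finrank F H.even = 4) :
    H.q0 ⟨H.one, H.one_even⟩ = 1 := by
  obtain ⟨w, hw, z, hz, hbz⟩ := oddPair H h8 h4
  have h := H.comp_ii₁ ⟨H.one, H.one_even⟩ w z
  simp only [H.one_mul] at h
  have : (H.q0 ⟨H.one, H.one_even⟩ - 1) * H.b w z = 0 := by linear_combination -h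
  rcases mul_eq_zero.mp this with h' | h'
  · have := sub_eq_zero.mp h'
    exact this
  · exact absurd h' hbz

theorem opL (hchar : ringChar F = 2) {x z : S} (hx : x ∈ H.even) (hz : z ∈ H.odd) :
    mul x (mul x z) + H.b x H.one • mul x z + H.q0 ⟨x, hx⟩ • z = 0 := by
  have hmem : mul x (mul x z) + H.b x H.one • mul x z + H.q0 ⟨x, hx⟩ • z ∈ H.odd := by
    exact Submodule.add_mem _ (Submodule.add_mem _
      (H.mul_eo x hx _ (H.mul_eo x hx z hz))
      (Submodule.smul_mem _ _ (H.mul_eo x hx z hz))) (Submodule.smul_mem _ _ hz)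
  refine H.b_odd_nondeg _ hmem (fun y hy => ?_)
  have h5 := f5 H hchar x (mul x z) y
  have hc : H.b (mul x z) (mul x y) = H.q0 ⟨x, hx⟩ * H.b z y := H.comp_ii₁ ⟨x, hx⟩ z y
  simp only [map_add, LinearMap.map_smul, LinearMap.add_apply, LinearMap.smul_apply, smul_eq_mul]
  linear_combination h5 + hc + (H.b x H.one * H.b (mul x z) y + H.q0 ⟨x, hx⟩ * H.b z y - H.b (mul x z) (mul x y)) * two0 hchar

theorem evenNondeg (hchar : ringChar F = 2)
    (h8 : Module.finrank F S = 8) (h4 : Module.finrank F H.even = 4)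
    {v : S} (hv : v ∈ H.even) (hb : ∀ w ∈ H.even, H.b v w = 0) : v = 0 := by
  have s2 : ∀ y ∈ H.odd, mul v y = 0 := by
    intro y hy
    refine H.b_odd_nondeg _ (H.mul_eo v hv y hy) (fun z hz => ?_)
    have h := f4 H hchar v y z H.one
    rw [H.mul_one, H.mul_one] at h
    have h1 : H.b v (mul z y) = 0 := hb _ (H.mul_oo z hz y hy)
    have h2 : H.b (mul z y) v = H.b v (mul z y) := bsymm H hchar _ _
    have h3 : H.b v z = 0 := (H.b_eo v hv z hz).1
    linear_combination h - h2 - h1 + H.b y H.one * h3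
  obtain ⟨w0, hw0, hw0ne⟩ := oddNe H h8 h4
  have s3 : H.q0 ⟨v, hv⟩ = 0 := by
    have h := opL H hchar hv hw0
    rw [s2 w0 hw0, map_zero, smul_zero, zero_add, zero_add] at h
    rcases smul_eq_zero.mp h with h' | h'
    · exact h'
    · exact absurd h' hw0ne
  have s4 := H.q0_reg ⟨v, hv⟩ (fun y => by rw [← H.b_polar]; exact hb y y.2) s3
  exact s4

theorem chID (hchar : ringChar F = 2)
    (h8 : Module.finrank F S = 8) (h4 : Module.finrank F H.even = 4)
    {v : S} (hv : v ∈ H.even) :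
    mul v v = H.b v H.one • v + H.q0 ⟨v, hv⟩ • H.one := by
  have key : mul v v + (H.b v H.one • v + H.q0 ⟨v, hv⟩ • H.one) = 0 := by
    refine evenNondeg H hchar h8 h4 ?_ (fun w hw => ?_)
    · exact Submodule.add_mem _ (H.mul_ee v hv v hv)
        (Submodule.add_mem _ (Submodule.smul_mem _ _ hv) (Submodule.smul_mem _ _ H.one_even))
    · have h5 := f5 H hchar v v w
      have hc : H.b v (mul v w) = H.q0 ⟨v, hv⟩ * H.b H.one w := by
        have := H.comp_ii₁ ⟨v, hv⟩ H.one w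
        rwa [H.mul_one] at this
      have hb1 : H.b H.one w = H.b w H.one := bsymm H hchar _ _
      simp only [map_add, LinearMap.map_smul, LinearMap.add_apply, LinearMap.smul_apply,
        smul_eq_mul]
      linear_combination h5 - hc + (H.b v H.one * H.b v w) * two0 hchar
  have := neg_eq_of_add_eq_zero_left key
  rw [← this, negS hchar]

end Derived

section Phi

variable (H : HurwitzSuperOn F S mul) (φ : S →ₗ[F] S)

theorem φcube (hφ3 : φ ∘ₗ (φ ∘ₗ φ) = LinearMap.id) (x : S) : φ (φ (φ x)) = x := by
  have := LinearMap.congr_fun hφ3 x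
  simpa using this

theorem φone (hφeven : ∀ x ∈ H.even, φ x = x) : φ H.one = H.one :=
  hφeven _ H.one_even

theorem ℓφ (hφeven : ∀ x ∈ H.even, φ x = x) (hφodd : ∀ x ∈ H.odd, φ x ∈ H.odd)
    (x : S) : H.b (φ x) H.one = H.b x H.one := by
  obtain ⟨a, ha, c, hc, rfl⟩ := decEO H x
  simp only [map_add, LinearMap.add_apply, hφeven a ha, ellodd H hc,
    ellodd H (hφodd c hc)]

theorem φiso (hchar : ringChar F = 2)
    (hφmul : ∀ x y : S, φ (mul x y) = mul (φ x) (φ y))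
    (hφeven : ∀ x ∈ H.even, φ x = x) (hφodd : ∀ x ∈ H.odd, φ x ∈ H.odd)
    (x y : S) : H.b (φ x) (φ y) = H.b x y := by
  have h1 := f9 H hchar (φ x) (φ y)
  rw [← hφmul, ℓφ H φ hφeven hφodd, ℓφ H φ hφeven hφodd, ℓφ H φ hφeven hφodd] at h1
  have h2 := f9 H hchar x y
  linear_combination h2 - h1

theorem φsum (hφ3 : φ ∘ₗ (φ ∘ₗ φ) = LinearMap.id)
    (hφodd : ∀ x ∈ H.odd, φ x ∈ H.odd) (hφfix : ∀ x ∈ H.odd, φ x = x → x = 0)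
    {x : S} (hx : x ∈ H.odd) : x + φ x + φ (φ x) = 0 := by
  refine hφfix _ (Submodule.add_mem _ (Submodule.add_mem _ hx (hφodd x hx))
    (hφodd _ (hφodd x hx))) ?_
  rw [map_add, map_add, φcube φ hφ3]
  abel

theorem barφ (hφeven : ∀ x ∈ H.even, φ x = x) (hφodd : ∀ x ∈ H.odd, φ x ∈ H.odd)
    (x : S) : φ (H.b x H.one • H.one - x) = H.b (φ x) H.one • H.one - φ x := by
  rw [_root_.map_sub, LinearMap.map_smul, φone H φ hφeven, ℓφ H φ hφeven hφodd]

theorem barbar (hchar : ringChar F = 2) (x : S) :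
    H.b (H.b x H.one • H.one - x) H.one • H.one - (H.b x H.one • H.one - x) = x := by
  rw [_root_.map_sub, LinearMap.sub_apply, LinearMap.map_smul, LinearMap.smul_apply,
    smul_eq_mul, b11 H hchar, mul_zero, zero_sub, neg_smul, negS hchar]
  abel

theorem barOdd (hchar : ringChar F = 2) {x : S} (hx : x ∈ H.odd) :
    H.b x H.one • H.one - x = x := by
  rw [ellodd H hx, zero_smul, zero_sub, negS hchar]

theorem barEven {x : S} (hx : x ∈ H.even) :
    H.b x H.one • H.one - x ∈ H.even :=
  Submodule.sub_mem _ (Submodule.smul_mem _ _ H.one_even) hx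

end Phi

section Graded

variable [Group G] [DecidableEq G]

noncomputable local instance : DecidableEq S := Classical.decEq S

/-- inverse of the canonical map, for an internal direct sum -/
noncomputable def decS (γ : G → Submodule F S) (hint : DirectSum.IsInternal γ) :
    S → DirectSum G (fun g => γ g) :=
  (LinearEquiv.ofBijective (DirectSum.coeLinearMap γ) hint).symm

/-- the projection onto the `m`-th component of the grading -/
noncomputable def piC (γ : G → Submodule F S) (hint : DirectSum.IsInternal γ)
    (m : G) (x : S) : S :=
  (decS γ hint x m : S)

variable (γ : G → Submodule F S) (hint : DirectSum.IsInternal γ)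

theorem piC_mem (m : G) (x : S) : piC γ hint m x ∈ γ m := (decS γ hint x m).2

theorem piC_eq {k : G} {x : S} (hx : x ∈ γ k) : piC γ hint k x = x := by
  unfold piC decS
  rw [hint.ofBijective_coeLinearMap_of_mem hx]

theorem piC_ne {k m : G} {x : S} (hx : x ∈ γ k) (hne : m ≠ k) : piC γ hint m x = 0 := by
  unfold piC decS
  rw [hint.ofBijective_coeLinearMap_of_mem_ne (Ne.symm hne) hx]
  rfl

theorem piC_add (m : G) (x y : S) :
    piC γ hint m (x + y) = piC γ hint m x + piC γ hint m y := by
  unfold piC decS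
  rw [map_add, DirectSum.add_apply, Submodule.coe_add]

theorem piC_smul (m : G) (c : F) (x : S) :
    piC γ hint m (c • x) = c • piC γ hint m x := by
  unfold piC decS
  rw [LinearEquiv.map_smul]
  rfl

theorem piC_zero (m : G) : piC γ hint m 0 = 0 := by
  unfold piC decS
  rw [map_zero]
  rfl

theorem piC_sub (m : G) (x y : S) :
    piC γ hint m (x - y) = piC γ hint m x - piC γ hint m y := by
  unfold piC decS
  rw [_root_.map_sub, DirectSum.sub_apply]
  rfl

theorem piC_sum (x : S) : x = ∑ m ∈ (decS γ hint x).support, piC γ hint m x := by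
  conv_lhs => rw [show x = (LinearEquiv.ofBijective (DirectSum.coeLinearMap γ) hint)
    ((LinearEquiv.ofBijective (DirectSum.coeLinearMap γ) hint).symm x) by
      rw [LinearEquiv.apply_symm_apply]]
  show DirectSum.coeLinearMap γ (decS γ hint x) = _
  rw [DirectSum.coeLinearMap_eq_dfinsuppSum]
  rfl

theorem piC_support {m : G} {x : S} (hm : m ∉ (decS γ hint x).support) :
    piC γ hint m x = 0 := by
  unfold piC
  rw [DFinsupp.notMem_support_iff.mp hm]
  rfl

theorem piC_total {x : S} (h : ∀ m, piC γ hint m x = 0) : x = 0 := by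
  rw [piC_sum γ hint x]
  exact Finset.sum_eq_zero (fun m _ => h m)

end Graded

section GradedAlg

variable [Group G] [DecidableEq G]
variable (H : HurwitzSuperOn F S mul)
variable (γ : G → Submodule F S)

theorem piC_finsum (hint : DirectSum.IsInternal γ) {ι : Type*} (m : G) (s : Finset ι) (f : ι → S) :
    piC γ hint m (∑ i ∈ s, f i) = ∑ i ∈ s, piC γ hint m (f i) := by
  classical
  induction s using Finset.cons_induction with
  | empty => simpa using piC_zero γ hint m
  | cons a s ha ih =>
      rw [Finset.sum_cons, Finset.sum_cons, piC_add, ih]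

theorem superSplit (hsuper : ∀ g : G, γ g = (γ g ⊓ H.even) ⊔ (γ g ⊓ H.odd))
    {k : G} {x : S} (hx : x ∈ γ k) :
    ∃ a c : S, a ∈ γ k ∧ a ∈ H.even ∧ c ∈ γ k ∧ c ∈ H.odd ∧ x = a + c := by
  rw [hsuper k] at hx
  rcases Submodule.mem_sup.mp hx with ⟨a, ha, c, hc, h⟩
  exact ⟨a, c, ha.1, ha.2, hc.1, hc.2, h.symm⟩

theorem piParity (hint : DirectSum.IsInternal γ) (hsuper : ∀ g : G, γ g = (γ g ⊓ H.even) ⊔ (γ g ⊓ H.odd))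
    {x : S} (hx : x ∈ H.even) (m : G) : piC γ hint m x ∈ H.even := by
  classical
  have hchoice : ∀ m' : G, ∃ a c : S, a ∈ γ m' ∧ a ∈ H.even ∧ c ∈ γ m' ∧ c ∈ H.odd ∧
      piC γ hint m' x = a + c :=
    fun m' => superSplit H γ hsuper (piC_mem γ hint m' x)
  choose a c hag hae hcg hco hac using hchoice
  set s := (decS γ hint x).support with hs
  have hsum : x = (∑ m' ∈ s, a m') + (∑ m' ∈ s, c m') := by
    rw [← Finset.sum_add_distrib]
    calc x = ∑ m' ∈ s, piC γ hint m' x := piC_sum γ hint x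
    _ = ∑ m' ∈ s, (a m' + c m') := Finset.sum_congr rfl (fun m' _ => hac m')
  have hco_sum : (∑ m' ∈ s, c m') ∈ H.odd := Submodule.sum_mem _ (fun m' _ => hco m')
  have hce : (∑ m' ∈ s, c m') ∈ H.even := by
    have : (∑ m' ∈ s, c m') = x - (∑ m' ∈ s, a m') := by rw [hsum]; abel
    rw [this]
    exact Submodule.sub_mem _ hx (Submodule.sum_mem _ (fun m' _ => hae m'))
  have hczero : (∑ m' ∈ s, c m') = 0 := eo_disj H hce hco_sum
  have hcm : ∀ m' ∈ s, c m' = 0 := by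
    intro m0 hm0
    have h1 : piC γ hint m0 (∑ m' ∈ s, c m') = c m0 := by
      rw [piC_finsum]
      rw [Finset.sum_eq_single m0]
      · exact piC_eq γ hint (hcg m0)
      · intro m1 _ hne; exact piC_ne γ hint (hcg m1) (Ne.symm hne)
      · intro h; exact absurd hm0 h
    rw [hczero, piC_zero] at h1
    exact h1.symm
  by_cases hm : m ∈ s
  · rw [hac m, hcm m hm, add_zero]; exact hae m
  · rw [piC_support γ hint hm]; exact Submodule.zero_mem _

theorem oneMemGr (hint : DirectSum.IsInternal γ) (hgr : ∀ g h : G, ∀ x ∈ γ g, ∀ y ∈ γ h, mul x y ∈ γ (g * h)) :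
    H.one ∈ γ (1 : G) := by
  classical
  set s := (decS γ hint H.one).support with hs
  set u : G → S := fun g => piC γ hint g H.one with hu
  have step1 : ∀ (h : G) (x : S), x ∈ γ h → mul x (u 1) = x := by
    intro h x hx
    have hexp : x = ∑ g ∈ s, mul x (u g) := by
      conv_lhs => rw [← H.mul_one x, piC_sum γ hint H.one, map_sum (mul x)]
    have hx2 : x = ∑ g ∈ s, (if g = 1 then mul x (u g) else 0) := by
      conv_lhs => rw [← piC_eq γ hint hx, hexp, piC_finsum]
      refine Finset.sum_congr rfl (fun g _ => ?_)
      by_cases hg1 : g = 1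
      · subst hg1
        rw [if_pos rfl]
        exact piC_eq γ hint (by simpa using hgr h 1 x hx (u 1) (piC_mem γ hint 1 H.one))
      · rw [if_neg hg1]
        refine piC_ne γ hint (hgr h g x hx (u g) (piC_mem γ hint g H.one)) ?_
        intro hcon
        exact hg1 (mul_eq_left.mp hcon.symm)
    rw [Finset.sum_ite_eq' s (1:G) (fun g => mul x (u g))] at hx2
    by_cases h1s : (1:G) ∈ s
    · rw [if_pos h1s] at hx2; exact hx2.symm
    · rw [if_neg h1s] at hx2
      have : u 1 = 0 := piC_support γ hint h1s
      rw [this, map_zero, hx2]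
  have step2 : ∀ x : S, mul x (u 1) = x := by
    intro x
    rw [piC_sum γ hint x, map_sum, LinearMap.sum_apply]
    exact Finset.sum_congr rfl (fun m _ => step1 m _ (piC_mem γ hint m x))
  have h3 : u 1 = H.one := by
    have h4 := step2 H.one
    rwa [H.one_mul] at h4
  rw [← h3]
  exact piC_mem γ hint 1 H.one

theorem traceMul (hint : DirectSum.IsInternal γ) (hchar : ringChar F = 2)
    (h8 : Module.finrank F S = 8) (h4 : Module.finrank F H.even = 4)
    (hsuper : ∀ g : G, γ g = (γ g ⊓ H.even) ⊔ (γ g ⊓ H.odd))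
    (hgr : ∀ g h : G, ∀ x ∈ γ g, ∀ y ∈ γ h, mul x y ∈ γ (g * h))
    {k : G} (hk : k ≠ 1) {x : S} (hx : x ∈ γ k) : H.b x H.one = 0 := by
  obtain ⟨a, c, hag, hae, hcg, hco, rfl⟩ := superSplit H γ hsuper hx
  have hlc : H.b c H.one = 0 := ellodd H hco
  have hla : H.b a H.one = 0 := by
    have hCH := chID H hchar h8 h4 hae
    have hmem : mul a a ∈ γ (k * k) := hgr k k a hag a hag
    have hkk : k ≠ k * k := by
      intro hcon
      exact hk (mul_eq_left.mp hcon.symm)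
    have h0 : piC γ hint k (mul a a) = 0 := piC_ne γ hint hmem hkk
    rw [hCH, piC_add, piC_smul, piC_smul, piC_eq γ hint hag,
      piC_ne γ hint (oneMemGr H γ hint hgr) hk, smul_zero, add_zero] at h0
    rcases smul_eq_zero.mp h0 with h' | h'
    · exact h'
    · rw [h']
      simp
  rw [map_add, LinearMap.add_apply, hla, hlc, add_zero]

theorem backwardDir (hint : DirectSum.IsInternal γ) (hchar : ringChar F = 2)
    (h8 : Module.finrank F S = 8) (h4 : Module.finrank F H.even = 4)
    (φ : S →ₗ[F] S) (hφeven : ∀ x ∈ H.even, φ x = x)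
    (hsuper : ∀ g : G, γ g = (γ g ⊓ H.even) ⊔ (γ g ⊓ H.odd))
    (hgr : ∀ g h : G, ∀ x ∈ γ g, ∀ y ∈ γ h, mul x y ∈ γ (g * h))
    (hphi : ∀ g : G, ∀ x ∈ γ g, φ x ∈ γ g)
    {g h : G} {x y : S} (hx : x ∈ γ g) (hy : y ∈ γ h) :
    mul (φ (H.b x H.one • H.one - x)) (φ (φ (H.b y H.one • H.one - y))) ∈ γ (g * h) := by
  have e1 : ∀ z : S, φ (H.b z H.one • H.one - z) = H.b z H.one • H.one - φ z := by
    intro z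
    rw [_root_.map_sub, LinearMap.map_smul, φone H φ hφeven]
  have e2 : φ (φ (H.b y H.one • H.one - y)) = H.b y H.one • H.one - φ (φ y) := by
    rw [e1, _root_.map_sub, LinearMap.map_smul, φone H φ hφeven]
  have expand : mul (H.b x H.one • H.one - φ x) (H.b y H.one • H.one - φ (φ y)) =
      ((H.b x H.one * H.b y H.one) • H.one - H.b x H.one • φ (φ y)) -
        (H.b y H.one • φ x - mul (φ x) (φ (φ y))) := by
    simp only [_root_.map_sub, LinearMap.map_smul, LinearMap.sub_apply,
      LinearMap.smul_apply, H.one_mul, H.mul_one]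
    module
  rw [e1, e2, expand]
  have t4 : mul (φ x) (φ (φ y)) ∈ γ (g * h) :=
    hgr g h _ (hphi g x hx) _ (hphi h _ (hphi h y hy))
  have t1 : (H.b x H.one * H.b y H.one) • H.one ∈ γ (g * h) := by
    by_cases hg : g = 1
    · by_cases hh : h = 1
      · subst hg; subst hh
        rw [one_mul]
        exact Submodule.smul_mem _ _ (oneMemGr H γ hint hgr)
      · rw [traceMul H γ hint hchar h8 h4 hsuper hgr hh hy, mul_zero, zero_smul]
        exact Submodule.zero_mem _
    · rw [traceMul H γ hint hchar h8 h4 hsuper hgr hg hx, zero_mul, zero_smul]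
      exact Submodule.zero_mem _
  have t2 : H.b x H.one • φ (φ y) ∈ γ (g * h) := by
    by_cases hg : g = 1
    · subst hg
      rw [one_mul]
      exact Submodule.smul_mem _ _ (hphi h _ (hphi h y hy))
    · rw [traceMul H γ hint hchar h8 h4 hsuper hgr hg hx, zero_smul]
      exact Submodule.zero_mem _
  have t3 : H.b y H.one • φ x ∈ γ (g * h) := by
    by_cases hh : h = 1
    · subst hh
      rw [mul_one]
      exact Submodule.smul_mem _ _ (hphi g x hx)
    · rw [traceMul H γ hint hchar h8 h4 hsuper hgr hh hy, zero_smul]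
      exact Submodule.zero_mem _
  exact Submodule.sub_mem _ (Submodule.sub_mem _ t1 t2) (Submodule.sub_mem _ t3 t4)

end GradedAlg

section StarLemmas

variable [Group G] [DecidableEq G]
variable (H : HurwitzSuperOn F S mul)

/-- the star (Okubo) product -/
def stE (H : HurwitzSuperOn F S mul) (φ : S →ₗ[F] S) (x y : S) : S :=
  mul (φ (H.b x H.one • H.one - x)) (φ (φ (H.b y H.one • H.one - y)))

variable (φ : S →ₗ[F] S)

theorem stE_zero (x : S) : stE H φ x 0 = 0 := by
  unfold stE
  simp

theorem stE_add (x y z : S) : stE H φ x (y + z) = stE H φ x y + stE H φ x z := by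
  unfold stE
  have : H.b (y + z) H.one • H.one - (y + z) =
      (H.b y H.one • H.one - y) + (H.b z H.one • H.one - z) := by
    simp only [map_add, LinearMap.add_apply]
    module
  rw [this, map_add, map_add, map_add]

theorem stE_smul (c : F) (x y : S) : stE H φ x (c • y) = c • stE H φ x y := by
  unfold stE
  have : H.b (c • y) H.one • H.one - (c • y) = c • (H.b y H.one • H.one - y) := by
    simp only [LinearMap.map_smul, LinearMap.smul_apply, smul_eq_mul]
    module
  rw [this, LinearMap.map_smul, LinearMap.map_smul, LinearMap.map_smul]

theorem stE_finsum {ι : Type*} (x : S) (s : Finset ι) (f : ι → S) :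
    stE H φ x (∑ i ∈ s, f i) = ∑ i ∈ s, stE H φ x (f i) := by
  classical
  induction s using Finset.cons_induction with
  | empty => simpa using stE_zero H φ x
  | cons a s ha ih => rw [Finset.sum_cons, Finset.sum_cons, stE_add, ih]

theorem stOneR (hchar : ringChar F = 2) (hφeven : ∀ x ∈ H.even, φ x = x) (x : S) :
    stE H φ x H.one = φ (H.b x H.one • H.one - x) := by
  unfold stE
  rw [b11 H hchar, zero_smul, zero_sub]
  simp only [_root_.map_neg, φone H φ hφeven, LinearMap.neg_apply, H.mul_one, negS hchar]

theorem stOneL (hchar : ringChar F = 2) (hφeven : ∀ x ∈ H.even, φ x = x) (x : S) :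
    stE H φ H.one x = φ (φ (H.b x H.one • H.one - x)) := by
  unfold stE
  rw [b11 H hchar, zero_smul, zero_sub]
  simp only [_root_.map_neg, φone H φ hφeven, LinearMap.neg_apply, H.one_mul, negS hchar]

theorem ℓbar (hchar : ringChar F = 2) (x : S) :
    H.b (H.b x H.one • H.one - x) H.one = - H.b x H.one := by
  rw [_root_.map_sub, LinearMap.sub_apply, LinearMap.map_smul, LinearMap.smul_apply,
    smul_eq_mul, b11 H hchar, mul_zero, zero_sub]

theorem q0bar (hchar : ringChar F = 2)
    (h8 : Module.finrank F S = 8) (h4 : Module.finrank F H.even = 4)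
    {v : S} (hv : v ∈ H.even) :
    H.q0 ⟨H.b v H.one • H.one - v, barEven H hv⟩ = H.q0 ⟨v, hv⟩ := by
  have hw : (⟨H.b v H.one • H.one - v, barEven H hv⟩ : H.even) =
      H.b v H.one • ⟨H.one, H.one_even⟩ - ⟨v, hv⟩ := rfl
  rw [hw, sub_eq_add_neg, QuadraticMap.map_add (⇑H.q0), QuadraticMap.map_smul,
    QuadraticMap.map_neg, polar_smul_left, polar_neg_right, q01 H h8 h4,
    ← H.b_polar ⟨H.one, H.one_even⟩ ⟨v, hv⟩]
  have hb : H.b H.one v = H.b v H.one := bsymm H hchar _ _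
  simp only [smul_eq_mul]
  rw [hb]
  ring

theorem stSq (hchar : ringChar F = 2)
    (h8 : Module.finrank F S = 8) (h4 : Module.finrank F H.even = 4)
    (hφeven : ∀ x ∈ H.even, φ x = x) {v : S} (hv : v ∈ H.even) :
    stE H φ v v = H.b v H.one • v +
      (H.q0 ⟨v, hv⟩ - H.b v H.one * H.b v H.one) • H.one := by
  unfold stE
  rw [hφeven _ (barEven H hv), hφeven _ (barEven H hv),
    chID H hchar h8 h4 (barEven H hv), ℓbar H hchar, q0bar H hchar h8 h4 hv]
  module


theorem stInv (hchar : ringChar F = 2) (hφ3 : φ ∘ₗ (φ ∘ₗ φ) = LinearMap.id)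
    (hφeven : ∀ x ∈ H.even, φ x = x) (hφodd : ∀ x ∈ H.odd, φ x ∈ H.odd)
    (x y : S) :
    stE H φ (φ (φ (H.b x H.one • H.one - x))) (φ (H.b y H.one • H.one - y)) = mul x y := by
  unfold stE
  have hbφ : ∀ w : S, H.b (φ w) H.one • H.one - φ w = φ (H.b w H.one • H.one - w) :=
    fun w => (barφ H φ hφeven hφodd w).symm
  simp only [hbφ]
  simp only [barbar H hchar]
  rw [φcube φ hφ3, φcube φ hφ3]

end StarLemmas

section Forward

variable [Group G] [DecidableEq G]
variable (H : HurwitzSuperOn F S mul) (φ : S →ₗ[F] S)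
variable (γ : G → Submodule F S)

theorem relI (hint : DirectSum.IsInternal γ) (hchar : ringChar F = 2)
    (hφeven : ∀ x ∈ H.even, φ x = x)
    (hst : ∀ g h : G, ∀ x ∈ γ g, ∀ y ∈ γ h, stE H φ x y ∈ γ (g * h))
    {h : G} {x : S} (hx : x ∈ γ h) (hxe : x ∈ H.even) (g : G) :
    stE H φ x (piC γ hint g H.one) =
      H.b x H.one • piC γ hint (h * g) H.one - (if g = 1 then x else 0) := by
  classical
  set u : G → S := fun g' => piC γ hint g' H.one with hu
  have key : ∀ m : G, stE H φ x (u (h⁻¹ * m)) = H.b x H.one • u m - piC γ hint m x := by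
    intro m
    have base : H.b x H.one • H.one - x = ∑ g' ∈ (decS γ hint H.one).support,
        stE H φ x (u g') := by
      rw [← stE_finsum, ← piC_sum γ hint H.one, stOneR H φ hchar hφeven,
        hφeven _ (barEven H hxe)]
    have hpi := congrArg (piC γ hint m) base
    rw [piC_sub, piC_smul, piC_finsum] at hpi
    have hterm : ∀ g' ∈ (decS γ hint H.one).support,
        piC γ hint m (stE H φ x (u g')) =
          if g' = h⁻¹ * m then stE H φ x (u g') else 0 := by
      intro g' _
      have hmem : stE H φ x (u g') ∈ γ (h * g') :=
        hst h g' x hx (u g') (piC_mem γ hint g' H.one)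
      by_cases hg' : g' = h⁻¹ * m
      · subst hg'
        rw [if_pos rfl]
        exact piC_eq γ hint (by rwa [mul_inv_cancel_left] at hmem)
      · rw [if_neg hg']
        refine piC_ne γ hint hmem (fun hcon => hg' ?_)
        rw [hcon, inv_mul_cancel_left]
    rw [Finset.sum_congr rfl hterm, Finset.sum_ite_eq' _ (h⁻¹ * m)] at hpi
    by_cases hin : h⁻¹ * m ∈ (decS γ hint H.one).support
    · rw [if_pos hin] at hpi
      exact hpi.symm
    · rw [if_neg hin] at hpi
      have : u (h⁻¹ * m) = 0 := piC_support γ hint hin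
      rw [this, stE_zero]
      exact hpi.symm
  have h2 := key (h * g)
  rw [inv_mul_cancel_left] at h2
  rw [h2]
  congr 1
  by_cases hg : g = 1
  · subst hg
    rw [if_pos rfl, mul_one]
    exact piC_eq γ hint hx
  · rw [if_neg hg]
    exact piC_ne γ hint hx (fun hcon => hg (mul_eq_left.mp hcon))


theorem piC_neg (hint : DirectSum.IsInternal γ) (m : G) (x : S) :
    piC γ hint m (-x) = - piC γ hint m x := by
  rw [← zero_sub x, piC_sub, piC_zero, zero_sub]

theorem traceStar (hint : DirectSum.IsInternal γ) (hchar : ringChar F = 2)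
    (h8 : Module.finrank F S = 8) (h4 : Module.finrank F H.even = 4)
    (hφeven : ∀ x ∈ H.even, φ x = x)
    (hsuper : ∀ g : G, γ g = (γ g ⊓ H.even) ⊔ (γ g ⊓ H.odd))
    (hst : ∀ g h : G, ∀ x ∈ γ g, ∀ y ∈ γ h, stE H φ x y ∈ γ (g * h))
    {k : G} (hk : k ≠ 1) {a : S} (ha : a ∈ γ k) (hae : a ∈ H.even) :
    H.b a H.one = 0 := by
  classical
  by_contra hla
  have ha0 : a ≠ 0 := by
    intro h0
    rw [h0] at hla
    simp at hla
  have sq : stE H φ a a = H.b a H.one • a +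
      (H.q0 ⟨a, hae⟩ - H.b a H.one * H.b a H.one) • H.one :=
    stSq H φ hchar h8 h4 hφeven hae
  have hmem : stE H φ a a ∈ γ (k * k) := hst k k a ha a ha
  have hkne : k ≠ k * k := fun hcon => hk (mul_eq_left.mp hcon.symm)
  have e1 : H.b a H.one • a +
      (H.q0 ⟨a, hae⟩ - H.b a H.one * H.b a H.one) • piC γ hint k H.one = 0 := by
    have h0 : piC γ hint k (stE H φ a a) = 0 := piC_ne γ hint hmem hkne
    rw [sq, piC_add, piC_smul, piC_smul, piC_eq γ hint ha] at h0
    exact h0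
  have hcne : H.q0 ⟨a, hae⟩ - H.b a H.one * H.b a H.one ≠ 0 := by
    intro h0
    rw [h0, zero_smul, add_zero] at e1
    rcases smul_eq_zero.mp e1 with h' | h'
    · exact hla h'
    · exact ha0 h'
  have hukne : piC γ hint k H.one ≠ 0 := by
    intro h0
    rw [h0, smul_zero, add_zero] at e1
    rcases smul_eq_zero.mp e1 with h' | h'
    · exact hla h'
    · exact ha0 h'
  have hum : ∀ m : G, m ≠ k → m ≠ k * k → piC γ hint m H.one = 0 := by
    intro m h1 h2
    have h0 : piC γ hint m (stE H φ a a) = 0 := piC_ne γ hint hmem h2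
    rw [sq, piC_add, piC_smul, piC_smul, piC_ne γ hint ha h1, smul_zero, zero_add] at h0
    rcases smul_eq_zero.mp h0 with h' | h'
    · exact absurd h' hcne
    · exact h'
  by_cases hue : piC γ hint 1 H.one = 0
  · -- the identity component of 1 vanishes: the even part is too small
    have hspan : H.even ≤ Submodule.span F
        {piC γ hint k H.one, piC γ hint (k * k) H.one} := by
      intro x hxE
      rw [piC_sum γ hint x]
      refine Submodule.sum_mem _ (fun m _ => ?_)
      have hme : piC γ hint m x ∈ H.even := piParity H γ hint hsuper hxE m
      have hmg : piC γ hint m x ∈ γ m := piC_mem γ hint m x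
      have hrel := relI H φ γ hint hchar hφeven hst hmg hme 1
      rw [if_pos rfl, mul_one, hue, stE_zero] at hrel
      have hform : piC γ hint m x =
          H.b (piC γ hint m x) H.one • piC γ hint m H.one :=
        (sub_eq_zero.mp hrel.symm).symm
      rw [hform]
      refine Submodule.smul_mem _ _ ?_
      by_cases hmk : m = k
      · subst hmk
        exact Submodule.subset_span (by simp)
      · by_cases hmkk : m = k * k
        · subst hmkk
          exact Submodule.subset_span (by simp)
        · rw [hum m hmk hmkk]
          exact Submodule.zero_mem _
    have hfin : FiniteDimensional F S :=
      Module.finite_of_finrank_pos (by rw [h8]; norm_num)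
    have h2' : Module.finrank F (Submodule.span F
        ({piC γ hint k H.one, piC γ hint (k * k) H.one} : Set S)) ≤ 2 := by
      refine le_trans (finrank_span_le_card _) ?_
      simp only [Set.toFinset_insert, Set.toFinset_singleton]
      exact le_trans (Finset.card_insert_le _ _) (by simp)
    have hle := Submodule.finrank_mono hspan
    rw [h4] at hle
    omega
  · -- the identity component of 1 is nonzero: contradiction via its star-square
    have h1g : piC γ hint 1 H.one ∈ γ 1 := piC_mem γ hint 1 H.one
    have h1e : piC γ hint 1 H.one ∈ H.even := piParity H γ hint hsuper H.one_even 1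
    have sq' := stSq H φ hchar h8 h4 hφeven h1e
    have hrel := relI H φ γ hint hchar hφeven hst h1g h1e 1
    rw [if_pos rfl, mul_one] at hrel
    rw [sq'] at hrel
    set w := piC γ hint 1 H.one with hw
    set L1 := H.b w H.one with hL1
    have hco : (H.q0 ⟨w, h1e⟩ - L1 * L1) • H.one = - w := by
      calc (H.q0 ⟨w, h1e⟩ - L1 * L1) • H.one
          = (L1 • w + (H.q0 ⟨w, h1e⟩ - L1 * L1) • H.one) - L1 • w := by abel
        _ = (L1 • w - w) - L1 • w := by rw [hrel]
        _ = - w := by abel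
    have hpk := congrArg (piC γ hint k) hco
    rw [piC_smul, piC_neg, piC_ne γ hint h1g hk, neg_zero] at hpk
    rcases smul_eq_zero.mp hpk with h' | h'
    · rw [h', zero_smul] at hco
      exact hue (by rw [← negS hchar w, ← hco])
    · exact hukne h'


theorem traceStarFull (hint : DirectSum.IsInternal γ) (hchar : ringChar F = 2)
    (h8 : Module.finrank F S = 8) (h4 : Module.finrank F H.even = 4)
    (hφeven : ∀ x ∈ H.even, φ x = x)
    (hsuper : ∀ g : G, γ g = (γ g ⊓ H.even) ⊔ (γ g ⊓ H.odd))
    (hst : ∀ g h : G, ∀ x ∈ γ g, ∀ y ∈ γ h, stE H φ x y ∈ γ (g * h))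
    {k : G} (hk : k ≠ 1) {x : S} (hx : x ∈ γ k) : H.b x H.one = 0 := by
  obtain ⟨a, c, hag, hae, hcg, hco, rfl⟩ := superSplit H γ hsuper hx
  rw [map_add, LinearMap.add_apply, ellodd H hco,
    traceStar H φ γ hint hchar h8 h4 hφeven hsuper hst hk hag hae, add_zero]

theorem ellStE_even (hchar : ringChar F = 2) (hφeven : ∀ x ∈ H.even, φ x = x)
    {x y : S} (hx : x ∈ H.even) (hy : y ∈ H.even) :
    H.b (stE H φ x y) H.one = H.b x y - H.b x H.one * H.b y H.one := by
  unfold stE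
  rw [hφeven _ (barEven H hx), hφeven _ (barEven H hy), hφeven _ (barEven H hy)]
  have h9 := f9 H hchar (H.b x H.one • H.one - x) (H.b y H.one • H.one - y)
  rw [ℓbar H hchar, ℓbar H hchar] at h9
  have hbb : H.b (H.b x H.one • H.one - x) (H.b y H.one • H.one - y) =
      H.b x y - H.b x H.one * H.b y H.one - H.b x H.one * H.b y H.one := by
    have hb1y : H.b H.one y = H.b y H.one := bsymm H hchar _ _
    simp only [_root_.map_sub, LinearMap.map_smul, LinearMap.sub_apply,
      LinearMap.smul_apply, smul_eq_mul, b11 H hchar]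
    rw [hb1y]
    ring
  rw [hbb] at h9
  rw [h9]
  ring

theorem ellStE_odd (hchar : ringChar F = 2)
    (hφmul : ∀ x y : S, φ (mul x y) = mul (φ x) (φ y))
    (hφ3 : φ ∘ₗ (φ ∘ₗ φ) = LinearMap.id)
    (hφeven : ∀ x ∈ H.even, φ x = x) (hφodd : ∀ x ∈ H.odd, φ x ∈ H.odd)
    (hφfix : ∀ x ∈ H.odd, φ x = x → x = 0)
    {u v : S} (hu : u ∈ H.odd) (hv : v ∈ H.odd) :
    H.b (stE H φ u v) H.one + H.b (stE H φ v u) H.one = - H.b u v := by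
  have hsu : stE H φ u v = mul (φ u) (φ (φ v)) := by
    unfold stE
    rw [barOdd H hchar hu, barOdd H hchar hv]
  have hsv : stE H φ v u = mul (φ v) (φ (φ u)) := by
    unfold stE
    rw [barOdd H hchar hu, barOdd H hchar hv]
  have e1 : H.b (stE H φ u v) H.one = H.b (φ u) (φ (φ v)) := by
    rw [hsu, f9 H hchar, ellodd H (hφodd u hu), zero_mul, add_zero]
  have e2 : H.b (stE H φ v u) H.one = H.b (φ v) (φ (φ u)) := by
    rw [hsv, f9 H hchar, ellodd H (hφodd v hv), zero_mul, add_zero]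
  have i1 : H.b (φ u) (φ (φ v)) = H.b u (φ v) := φiso H φ hchar hφmul hφeven hφodd u (φ v)
  have i2 : H.b (φ v) (φ (φ u)) = H.b v (φ u) := φiso H φ hchar hφmul hφeven hφodd v (φ u)
  have hsum := congrArg (fun z => H.b u z) (φsum H φ hφ3 hφodd hφfix hv)
  simp only [map_add, map_zero] at hsum
  have h2 : H.b u (φ (φ v)) = H.b (φ u) v := by
    calc H.b u (φ (φ v)) = H.b (φ u) (φ (φ (φ v))) :=
          (φiso H φ hchar hφmul hφeven hφodd u (φ (φ v))).symm
      _ = H.b (φ u) v := by rw [φcube φ hφ3]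
  have hvu : H.b v (φ u) = H.b (φ u) v := bsymm H hchar _ _
  rw [e1, e2, i1, i2, hvu]
  linear_combination hsum - h2

theorem orthStar (hint : DirectSum.IsInternal γ) (hchar : ringChar F = 2)
    (h8 : Module.finrank F S = 8) (h4 : Module.finrank F H.even = 4)
    (hφmul : ∀ x y : S, φ (mul x y) = mul (φ x) (φ y))
    (hφ3 : φ ∘ₗ (φ ∘ₗ φ) = LinearMap.id)
    (hφeven : ∀ x ∈ H.even, φ x = x) (hφodd : ∀ x ∈ H.odd, φ x ∈ H.odd)
    (hφfix : ∀ x ∈ H.odd, φ x = x → x = 0)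
    (hsuper : ∀ g : G, γ g = (γ g ⊓ H.even) ⊔ (γ g ⊓ H.odd))
    (hst : ∀ g h : G, ∀ x ∈ γ g, ∀ y ∈ γ h, stE H φ x y ∈ γ (g * h))
    {g h : G} (hgh : g * h ≠ 1) {x y : S} (hx : x ∈ γ g) (hy : y ∈ γ h) :
    H.b x y = 0 := by
  obtain ⟨a, c, hag, hae, hcg, hco, rfl⟩ := superSplit H γ hsuper hx
  obtain ⟨a', c', hag', hae', hcg', hco', rfl⟩ := superSplit H γ hsuper hy
  have hee : H.b a a' = 0 := by
    have hkey := ellStE_even H φ hchar hφeven hae hae'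
    have hmem : stE H φ a a' ∈ γ (g * h) := hst g h a hag a' hag'
    rw [traceStarFull H φ γ hint hchar h8 h4 hφeven hsuper hst hgh hmem] at hkey
    by_cases hg1 : g = 1
    · have hh1 : h ≠ 1 := by
        intro hcon
        rw [hg1, hcon, one_mul] at hgh
        exact hgh rfl
      rw [traceStar H φ γ hint hchar h8 h4 hφeven hsuper hst hh1 hag' hae', mul_zero] at hkey
      linear_combination -hkey
    · rw [traceStar H φ γ hint hchar h8 h4 hφeven hsuper hst hg1 hag hae, zero_mul] at hkey
      linear_combination -hkey
  have hoo : H.b c c' = 0 := by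
    have hkey := ellStE_odd H φ hchar hφmul hφ3 hφeven hφodd hφfix hco hco'
    have hm1 : stE H φ c c' ∈ γ (g * h) := hst g h c hcg c' hcg'
    have hhg : h * g ≠ 1 := by
      intro hcon
      exact hgh (by rw [eq_inv_of_mul_eq_one_right hcon, inv_mul_cancel])
    have hm2 : stE H φ c' c ∈ γ (h * g) := hst h g c' hcg' c hcg
    rw [traceStarFull H φ γ hint hchar h8 h4 hφeven hsuper hst hgh hm1,
      traceStarFull H φ γ hint hchar h8 h4 hφeven hsuper hst hhg hm2] at hkey
    linear_combination hkey
  have heo : H.b a c' = 0 := (H.b_eo a hae c' hco').1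
  have hoe : H.b c a' = 0 := (H.b_eo a' hae' c hco).2
  simp only [map_add, LinearMap.add_apply]
  rw [hee, hoo, heo, hoe]
  ring


theorem oneMemStar (hint : DirectSum.IsInternal γ) (hchar : ringChar F = 2)
    (h8 : Module.finrank F S = 8) (h4 : Module.finrank F H.even = 4)
    (hφmul : ∀ x y : S, φ (mul x y) = mul (φ x) (φ y))
    (hφ3 : φ ∘ₗ (φ ∘ₗ φ) = LinearMap.id)
    (hφeven : ∀ x ∈ H.even, φ x = x) (hφodd : ∀ x ∈ H.odd, φ x ∈ H.odd)
    (hφfix : ∀ x ∈ H.odd, φ x = x → x = 0)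
    (hsuper : ∀ g : G, γ g = (γ g ⊓ H.even) ⊔ (γ g ⊓ H.odd))
    (hst : ∀ g h : G, ∀ x ∈ γ g, ∀ y ∈ γ h, stE H φ x y ∈ γ (g * h)) :
    H.one ∈ γ (1 : G) := by
  classical
  have claim1 : ∀ m : G, m ≠ 1 → ∀ y ∈ H.even, H.b (piC γ hint m H.one) y = 0 := by
    intro m hm y hyE
    have hexp : H.b (piC γ hint m H.one) y = ∑ h' ∈ (decS γ hint y).support,
        H.b (piC γ hint m H.one) (piC γ hint h' y) := by
      conv_lhs => rw [piC_sum γ hint y, map_sum (H.b (piC γ hint m H.one))]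
    rw [hexp]
    refine Finset.sum_eq_zero (fun h' _ => ?_)
    by_cases hmh : m * h' = 1
    · have hy'g : piC γ hint h' y ∈ γ h' := piC_mem γ hint h' y
      have hy'e : piC γ hint h' y ∈ H.even := piParity H γ hint hsuper hyE h'
      have hh'1 : h' ≠ 1 := by
        intro hcon
        rw [hcon, mul_one] at hmh
        exact hm hmh
      have hmeq : m = h'⁻¹ := eq_inv_of_mul_eq_one_left hmh
      have hly' : H.b (piC γ hint h' y) H.one = 0 :=
        traceStar H φ γ hint hchar h8 h4 hφeven hsuper hst hh'1 hy'g hy'e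
      have hsum1 : H.b (piC γ hint h' y) H.one = ∑ g' ∈ (decS γ hint H.one).support,
          H.b (piC γ hint h' y) (piC γ hint g' H.one) := by
        conv_lhs => rw [piC_sum γ hint H.one, map_sum (H.b (piC γ hint h' y))]
      have hterm : ∀ g' ∈ (decS γ hint H.one).support,
          H.b (piC γ hint h' y) (piC γ hint g' H.one) =
            if g' = m then H.b (piC γ hint h' y) (piC γ hint m H.one) else 0 := by
        intro g' _
        by_cases hg' : g' = m
        · subst hg'
          rw [if_pos rfl]
        · rw [if_neg hg']
          have hne : h' * g' ≠ 1 := by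
            intro hcon
            exact hg' (by rw [eq_inv_of_mul_eq_one_right hcon, ← hmeq])
          exact orthStar H φ γ hint hchar h8 h4 hφmul hφ3 hφeven hφodd hφfix hsuper hst
            hne hy'g (piC_mem γ hint g' H.one)
      rw [hsum1, Finset.sum_congr rfl hterm, Finset.sum_ite_eq' _ m] at hly'
      have hb0 : H.b (piC γ hint h' y) (piC γ hint m H.one) = 0 := by
        by_cases hms : m ∈ (decS γ hint H.one).support
        · rw [if_pos hms] at hly'
          exact hly'
        · rw [piC_support γ hint hms, map_zero]
      rw [← bsymm H hchar]
      exact hb0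
    · exact orthStar H φ γ hint hchar h8 h4 hφmul hφ3 hφeven hφodd hφfix hsuper hst
        hmh (piC_mem γ hint m H.one) (piC_mem γ hint h' y)
  have hkey : ∀ w ∈ H.even, H.b (H.one - piC γ hint 1 H.one) w = 0 := by
    intro w hw
    rw [_root_.map_sub, LinearMap.sub_apply]
    have h1w : H.b H.one w = ∑ g' ∈ (decS γ hint H.one).support,
        (H.b (piC γ hint g' H.one)) w := by
      conv_lhs => rw [piC_sum γ hint H.one, map_sum, LinearMap.sum_apply]
    have hterm : ∀ g' ∈ (decS γ hint H.one).support,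
        H.b (piC γ hint g' H.one) w =
          if g' = 1 then H.b (piC γ hint 1 H.one) w else 0 := by
      intro g' _
      by_cases h1 : g' = 1
      · subst h1
        rw [if_pos rfl]
      · rw [if_neg h1]
        exact claim1 g' h1 w hw
    rw [h1w, Finset.sum_congr rfl hterm, Finset.sum_ite_eq' _ 1]
    by_cases h1s : (1 : G) ∈ (decS γ hint H.one).support
    · rw [if_pos h1s, sub_self]
    · rw [if_neg h1s, piC_support γ hint h1s, map_zero, LinearMap.zero_apply, sub_zero]
  have hmem : H.one - piC γ hint 1 H.one ∈ H.even :=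
    Submodule.sub_mem _ H.one_even (piParity H γ hint hsuper H.one_even 1)
  have hzero := evenNondeg H hchar h8 h4 hmem hkey
  have h1 : H.one = piC γ hint 1 H.one := by
    rw [sub_eq_zero] at hzero
    exact hzero
  rw [h1]
  exact piC_mem γ hint 1 H.one

end Forward



end OkuboAux

/-- for the Okubo superalgebra `S = C̄_φ` in characteristic 2 with product
`x*y = φ(x̄)·φ²(ȳ)` (where `C` is a Cayley superalgebra with even part the quaternion
subalgebra, `φ³ = 1`, `φ|_{C₀} = 1`, no nonzero `φ`-fixed odd vectors), a decomposition
compatible with the main `ℤ₂`-grading is a group grading of `(S,*)` iff it is a group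
grading of `(S,·)` whose homogeneous components are all `φ`-invariant. -/
theorem okubo_gradings_characterization {F S G : Type*} [Field F] [AddCommGroup S]
    [Module F S] [Group G] [DecidableEq G]
    (hchar : ringChar F = 2)
    (mul : S →ₗ[F] S →ₗ[F] S) (H : HurwitzSuperOn F S mul)
    (h8 : Module.finrank F S = 8) (h4 : Module.finrank F H.even = 4)
    (φ : S →ₗ[F] S)
    (hφmul : ∀ x y : S, φ (mul x y) = mul (φ x) (φ y))
    (hφ3 : φ ∘ₗ (φ ∘ₗ φ) = LinearMap.id)
    (hφne : φ ≠ LinearMap.id)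
    (hφeven : ∀ x ∈ H.even, φ x = x)
    (hφodd : ∀ x ∈ H.odd, φ x ∈ H.odd)
    (hφfix : ∀ x ∈ H.odd, φ x = x → x = 0)
    (γ : G → Submodule F S) (hint : DirectSum.IsInternal γ)
    (hsuper : ∀ g : G, γ g = (γ g ⊓ H.even) ⊔ (γ g ⊓ H.odd)) :
    (∀ g h : G, ∀ x ∈ γ g, ∀ y ∈ γ h,
      mul (φ (H.b x H.one • H.one - x)) (φ (φ (H.b y H.one • H.one - y))) ∈ γ (g * h)) ↔
    ((∀ g h : G, ∀ x ∈ γ g, ∀ y ∈ γ h, mul x y ∈ γ (g * h)) ∧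
      ∀ g : G, ∀ x ∈ γ g, φ x ∈ γ g) := by
  constructor
  · intro hst
    have hst' : ∀ g h : G, ∀ x ∈ γ g, ∀ y ∈ γ h, OkuboAux.stE H φ x y ∈ γ (g * h) := hst
    have hone := OkuboAux.oneMemStar H φ γ hint hchar h8 h4 hφmul hφ3 hφeven hφodd hφfix
      hsuper hst'
    have hs1 : ∀ g : G, ∀ x ∈ γ g, φ (H.b x H.one • H.one - x) ∈ γ g := by
      intro g x hx
      have hm := hst' g 1 x hx H.one hone
      rw [OkuboAux.stOneR H φ hchar hφeven x] at hm
      rwa [mul_one] at hm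
    have hphi2 : ∀ g : G, ∀ x ∈ γ g, φ (φ x) ∈ γ g := by
      intro g x hx
      have h2 := hs1 g _ (hs1 g x hx)
      have he : φ (H.b (φ (H.b x H.one • H.one - x)) H.one • H.one -
          φ (H.b x H.one • H.one - x)) = φ (φ x) := by
        rw [← OkuboAux.barφ H φ hφeven hφodd, OkuboAux.barbar H hchar]
      rwa [he] at h2
    have hphi1 : ∀ g : G, ∀ x ∈ γ g, φ x ∈ γ g := by
      intro g x hx
      have h4' := hphi2 g _ (hphi2 g x hx)
      rwa [OkuboAux.φcube φ hφ3 (φ x)] at h4'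
    have hbar : ∀ g : G, ∀ x ∈ γ g, H.b x H.one • H.one - x ∈ γ g := by
      intro g x hx
      have h2 := hphi2 g _ (hs1 g x hx)
      rwa [OkuboAux.φcube φ hφ3 (H.b x H.one • H.one - x)] at h2
    refine ⟨fun g h x hx y hy => ?_, hphi1⟩
    have hm := hst' g h _ (hphi2 g _ (hbar g x hx)) _ (hphi1 h _ (hbar h y hy))
    rwa [OkuboAux.stInv H φ hchar hφ3 hφeven hφodd x y] at hm
  · rintro ⟨hgr, hphi⟩ g h x hx y hy
    exact OkuboAux.backwardDir H γ hint hchar h8 h4 φ hφeven hsuper hgr hphi hx hy
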